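/- arXiv:2203.14418 — 5 statements merged into one kernel-verified Lean document; each statement's English description precedes it below -/
import Mathlib

section
/- Let H1, H2, W be n×n real positive semidefinite matrices with H1 ≥ H2 ≥ W ≥ 0 in the Loewner order. Then det(H2 − W) · det(H1) ≤ det(H1 − W) · det(H2). -/
open Matrix

variable {n : ℕ}

section SqrtCompat
open scoped MatrixOrder

noncomputable def Matrix.PosSemidef.sqrt {A : Matrix (Fin n) (Fin n) ℝ} (_hA : A.PosSemidef) :
    Matrix (Fin n) (Fin n) ℝ := CFC.sqrt A

lemma Matrix.PosSemidef.sqrt_mul_self {A : Matrix (Fin n) (Fin n) ℝ} (hA : A.PosSemidef) :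
    hA.sqrt * hA.sqrt = A := CFC.sqrt_mul_sqrt_self A hA.nonneg

lemma Matrix.PosSemidef.posSemidef_sqrt {A : Matrix (Fin n) (Fin n) ℝ} (hA : A.PosSemidef) :
    hA.sqrt.PosSemidef := (CFC.sqrt_nonneg A).posSemidef

end SqrtCompat

lemma dot_cs (u v : Fin n → ℝ) : (u ⬝ᵥ v) ^ 2 ≤ (u ⬝ᵥ u) * (v ⬝ᵥ v) := by
  simpa [dotProduct, pow_two] using
    Finset.sum_mul_sq_le_sq_mul_sq Finset.univ u v

lemma dot_self_nonneg (u : Fin n → ℝ) : 0 ≤ u ⬝ᵥ u :=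
  Finset.sum_nonneg fun i _ => mul_self_nonneg _



lemma adj_dot (X : Matrix (Fin n) (Fin n) ℝ) (x y : Fin n → ℝ) :
    x ⬝ᵥ (Xᴴ *ᵥ y) = (X *ᵥ x) ⬝ᵥ y := by
  rw [dotProduct_mulVec, vecMul_conjTranspose]
  simp [star_trivial]

lemma adj_dot' (X : Matrix (Fin n) (Fin n) ℝ) (x y : Fin n → ℝ) :
    x ⬝ᵥ (X *ᵥ y) = (Xᴴ *ᵥ x) ⬝ᵥ y := by
  conv_lhs => rw [← conjTranspose_conjTranspose X]
  rw [adj_dot]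

lemma psd_det_nonneg {A : Matrix (Fin n) (Fin n) ℝ} (hA : A.PosSemidef) : 0 ≤ A.det := by
  rw [hA.isHermitian.det_eq_prod_eigenvalues]
  exact Finset.prod_nonneg fun i _ => hA.eigenvalues_nonneg i

lemma psd_posDef {A : Matrix (Fin n) (Fin n) ℝ} (hA : A.PosSemidef) (hd : A.det ≠ 0) :
    A.PosDef := by
  refine Matrix.PosDef.of_dotProduct_mulVec_pos hA.1 fun x hx => ?_
  rcases (hA.dotProduct_mulVec_nonneg x).lt_or_eq with h | h
  · exact h
  · exfalso
    exact hd (Matrix.exists_mulVec_eq_zero_iff.1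
      ⟨x, hx, (hA.dotProduct_mulVec_zero_iff x).1 h.symm⟩)

lemma psd_det_le_one {M : Matrix (Fin n) (Fin n) ℝ} (hM : M.PosSemidef)
    (h1 : (1 - M).PosSemidef) : M.det ≤ 1 := by
  rw [hM.isHermitian.det_eq_prod_eigenvalues]
  refine Finset.prod_le_one (fun i _ => hM.eigenvalues_nonneg i) (fun i _ => ?_)
  set v : Fin n → ℝ := ⇑(hM.isHermitian.eigenvectorBasis i) with hv
  have hmv : M *ᵥ v = hM.isHermitian.eigenvalues i • v := hM.isHermitian.mulVec_eigenvectorBasis i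
  have hnorm : v ⬝ᵥ v = 1 := by
    have h := hM.isHermitian.eigenvectorBasis.orthonormal.1 i
    have : (inner (𝕜 := ℝ) (hM.isHermitian.eigenvectorBasis i) (hM.isHermitian.eigenvectorBasis i) : ℝ) = 1 := by
      rw [real_inner_self_eq_norm_sq, h]; norm_num
    rw [EuclideanSpace.inner_eq_star_dotProduct] at this
    simpa [star_trivial] using this
  have h2 := h1.dotProduct_mulVec_nonneg v
  rw [show star v = v from funext fun j => star_trivial _] at h2
  rw [sub_mulVec, one_mulVec, dotProduct_sub, hmv, dotProduct_smul, hnorm] at h2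
  simp at h2
  norm_num
  exact h2

lemma det_mono {A B : Matrix (Fin n) (Fin n) ℝ} (hB : B.PosSemidef)
    (hAB : (A - B).PosSemidef) : B.det ≤ A.det := by
  have hA : A.PosSemidef := by
    have := hAB.add hB
    rwa [sub_add_cancel] at this
  by_cases hd : A.det = 0
  · obtain ⟨v, hv0, hvA⟩ := Matrix.exists_mulVec_eq_zero_iff.2 hd
    have h1 := hB.dotProduct_mulVec_nonneg v
    have h2 := hAB.dotProduct_mulVec_nonneg v
    have hsum : star v ⬝ᵥ B *ᵥ v + star v ⬝ᵥ (A - B) *ᵥ v = 0 := by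
      rw [← dotProduct_add, ← add_mulVec]
      simp [hvA]
    have hBv : star v ⬝ᵥ B *ᵥ v = 0 := le_antisymm (by linarith) h1
    have hB0 : B.det = 0 := Matrix.exists_mulVec_eq_zero_iff.1
      ⟨v, hv0, (hB.dotProduct_mulVec_zero_iff v).1 hBv⟩
    rw [hB0, hd]
  · have hApd : A.PosDef := psd_posDef hA hd
    set S := hA.sqrt with hSdef
    have hS : S * S = A := hA.sqrt_mul_self
    have hSd : S.det ≠ 0 := by
      intro h
      apply hd
      rw [← hS, det_mul, h, mul_zero]
    have hSu : IsUnit S.det := isUnit_iff_ne_zero.mpr hSd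
    have hSherm : S.IsHermitian := hA.posSemidef_sqrt.1
    set T := S⁻¹ with hTdef
    have hTS : T * S = 1 := nonsing_inv_mul S hSu
    have hST : S * T = 1 := mul_nonsing_inv S hSu
    have hTherm : Tᴴ = T := hSherm.inv
    have hM : (T * B * T).PosSemidef := by
      have := hB.mul_mul_conjTranspose_same T
      rwa [hTherm] at this
    have hTAT : T * A * T = 1 := by
      rw [← hS, ← mul_assoc, mul_assoc T S S, ← mul_assoc, hTS, one_mul, hST]
    have h1M : (1 - T * B * T).PosSemidef := by
      have h := hAB.mul_mul_conjTranspose_same T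
      rw [hTherm] at h
      have e : T * (A - B) * T = 1 - T * B * T := by
        rw [mul_sub, sub_mul, hTAT]
      rwa [e] at h
    have hdet := psd_det_le_one hM h1M
    have hdetA : (0:ℝ) < A.det := hApd.det_pos
    have hTd : T.det = (S.det)⁻¹ := by
      rw [hTdef, det_nonsing_inv, Ring.inverse_eq_inv']
    have hSA : S.det * S.det = A.det := by rw [← det_mul, hS]
    rw [det_mul, det_mul, hTd] at hdet
    have hSdpos : 0 < S.det := lt_of_le_of_ne (psd_det_nonneg hA.posSemidef_sqrt) (Ne.symm hSd)
    calc B.det = (S.det)⁻¹ * B.det * (S.det)⁻¹ * A.det := by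
          rw [← hSA]; field_simp
      _ ≤ 1 * A.det := by
          apply mul_le_mul_of_nonneg_right hdet hdetA.le
      _ = A.det := one_mul _

lemma inv_anti {A B : Matrix (Fin n) (Fin n) ℝ} (hA : A.PosDef) (hB : B.PosDef)
    (hAB : (A - B).PosSemidef) : (B⁻¹ - A⁻¹).PosSemidef := by
  have hAu : IsUnit A.det := isUnit_iff_ne_zero.mpr hA.det_pos.ne'
  have hBu : IsUnit B.det := isUnit_iff_ne_zero.mpr hB.det_pos.ne'
  refine Matrix.PosSemidef.of_dotProduct_mulVec_nonneg ((hB.isHermitian.inv).sub (hA.isHermitian.inv)) fun x => ?_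
  rw [show star x = x from funext fun j => star_trivial _]
  set u := A⁻¹ *ᵥ x with hu
  set v := B⁻¹ *ᵥ x with hvv
  have hAux : A *ᵥ u = x := by rw [hu, mulVec_mulVec, mul_nonsing_inv A hAu, one_mulVec]
  have hBvx : B *ᵥ v = x := by rw [hvv, mulVec_mulVec, mul_nonsing_inv B hBu, one_mulVec]
  have h1 : 0 ≤ u ⬝ᵥ ((A - B) *ᵥ u) := by
    have := hAB.dotProduct_mulVec_nonneg u
    rwa [show star u = u from funext fun j => star_trivial _] at this
  have h2 : 0 ≤ (u - v) ⬝ᵥ (B *ᵥ (u - v)) := by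
    have := hB.posSemidef.dotProduct_mulVec_nonneg (u - v)
    rwa [show star (u - v) = u - v from funext fun j => star_trivial _] at this
  rw [sub_mulVec, dotProduct_sub, hAux] at h1
  rw [mulVec_sub, dotProduct_sub, sub_dotProduct, sub_dotProduct, hBvx] at h2
  have hc : v ⬝ᵥ (B *ᵥ u) = x ⬝ᵥ u := by
    rw [adj_dot', hB.isHermitian.eq, hBvx]
  rw [sub_mulVec, dotProduct_sub, ← hvv, ← hu]
  have hxv : x ⬝ᵥ v = v ⬝ᵥ x := dotProduct_comm _ _
  have hux : u ⬝ᵥ x = x ⬝ᵥ u := dotProduct_comm _ _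
  linarith [h1, h2, hc, hxv, hux]

lemma opone {X : Matrix (Fin n) (Fin n) ℝ} (h : (1 - X * Xᴴ).PosSemidef) :
    (1 - Xᴴ * X).PosSemidef := by
  refine Matrix.PosSemidef.of_dotProduct_mulVec_nonneg ?_ ?_
  · exact Matrix.IsHermitian.sub (Matrix.isHermitian_one) (Matrix.isHermitian_conjTranspose_mul_self X)
  · intro x
    have hstar : star x = x := funext fun j => star_trivial _
    rw [hstar, sub_mulVec, one_mulVec, dotProduct_sub, ← Matrix.mulVec_mulVec, adj_dot]
    set t := X *ᵥ x with ht
    -- need : 0 ≤ x ⬝ᵥ x - t ⬝ᵥ t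
    have hb : (Xᴴ *ᵥ t) ⬝ᵥ (Xᴴ *ᵥ t) ≤ t ⬝ᵥ t := by
      have h2 := h.dotProduct_mulVec_nonneg t
      rw [show star t = t from funext fun j => star_trivial _, sub_mulVec, one_mulVec,
        dotProduct_sub, ← Matrix.mulVec_mulVec] at h2
      have : t ⬝ᵥ (X *ᵥ (Xᴴ *ᵥ t)) = (Xᴴ *ᵥ t) ⬝ᵥ (Xᴴ *ᵥ t) := by
        rw [adj_dot']
      linarith [h2, this.symm.le]
    have hcs := dot_cs x (Xᴴ *ᵥ t)
    have hx : x ⬝ᵥ (Xᴴ *ᵥ t) = t ⬝ᵥ t := by rw [adj_dot]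
    rw [hx] at hcs
    have h0 := dot_self_nonneg t
    have h1 := dot_self_nonneg (Xᴴ *ᵥ t)
    nlinarith [dot_self_nonneg x]

lemma key_lemma {H W : Matrix (Fin n) (Fin n) ℝ} (hH : H.PosDef) (hW : W.PosSemidef)
    (hHW : (H - W).PosSemidef) :
    (H - W).det = (1 - hW.sqrt * H⁻¹ * hW.sqrt).det * H.det ∧
      (1 - hW.sqrt * H⁻¹ * hW.sqrt).PosSemidef := by
  set R := hW.sqrt with hRdef
  have hR : R * R = W := hW.sqrt_mul_self
  have hRherm : Rᴴ = R := hW.posSemidef_sqrt.1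
  set S := hH.posSemidef.sqrt with hSdef
  have hS : S * S = H := hH.posSemidef.sqrt_mul_self
  have hSd : S.det ≠ 0 := by
    intro h
    have := hH.det_pos
    rw [← hS, det_mul, h, mul_zero] at this
    exact lt_irrefl _ this
  have hSu : IsUnit S.det := isUnit_iff_ne_zero.mpr hSd
  set T := S⁻¹ with hTdef
  have hTS : T * S = 1 := nonsing_inv_mul S hSu
  have hST : S * T = 1 := mul_nonsing_inv S hSu
  have hTherm : Tᴴ = T := (hH.posSemidef.posSemidef_sqrt.1).inv
  have hTT : T * T = H⁻¹ := by rw [hTdef, ← Matrix.mul_inv_rev, hS]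
  have hTHT : T * H * T = 1 := by
    rw [← hS, ← mul_assoc, mul_assoc T S S, ← mul_assoc, hTS, one_mul, hST]
  have hE : T * (H - W) * T = 1 - (T * R) * (R * T) := by
    rw [mul_sub, sub_mul, hTHT, ← hR]
    rw [show T * (R * R) * T = T * R * (R * T) by rw [← mul_assoc, ← mul_assoc]]
  have hEpsd : (1 - (T * R) * (R * T)).PosSemidef := by
    rw [← hE]
    have := hHW.mul_mul_conjTranspose_same T
    rwa [hTherm] at this
  have hXadj : (T * R)ᴴ = R * T := by rw [conjTranspose_mul, hTherm, hRherm]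
  have hpsd : (1 - R * H⁻¹ * R).PosSemidef := by
    have h := opone (X := T * R) (by rwa [hXadj])
    rw [hXadj] at h
    rwa [show (R * T) * (T * R) = R * H⁻¹ * R by rw [mul_assoc, ← mul_assoc T T R, hTT, ← mul_assoc]] at h
  refine ⟨?_, hpsd⟩
  have hdetE : (T * (H - W) * T).det = (1 - R * H⁻¹ * R).det := by
    rw [hE, det_one_sub_mul_comm,
      show (R * T) * (T * R) = R * H⁻¹ * R by rw [mul_assoc, ← mul_assoc T T R, hTT, ← mul_assoc]]
  have hTd : T.det = (S.det)⁻¹ := by rw [hTdef, det_nonsing_inv, Ring.inverse_eq_inv']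
  have hSH : S.det * S.det = H.det := by rw [← det_mul, hS]
  rw [det_mul, det_mul, hTd] at hdetE
  rw [← hdetE, ← hSH]
  field_simp

theorem det_loewner_monotone (n : ℕ) (H1 H2 W : Matrix (Fin n) (Fin n) ℝ)
    (hW : W.PosSemidef) (hH2W : (H2 - W).PosSemidef) (hH12 : (H1 - H2).PosSemidef) :
    (H2 - W).det * H1.det ≤ (H1 - W).det * H2.det := by
  have hH2 : H2.PosSemidef := by
    have := hH2W.add hW; rwa [sub_add_cancel] at this
  have hH1 : H1.PosSemidef := by
    have := hH12.add hH2; rwa [sub_add_cancel] at this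
  have hH1W : (H1 - W).PosSemidef := by
    have := hH12.add hH2W; rwa [sub_add_sub_cancel] at this
  by_cases hd2 : H2.det = 0
  · have hle : (H2 - W).det ≤ H2.det := det_mono hH2W (by rw [sub_sub_cancel]; exact hW)
    have h0 : (H2 - W).det = 0 :=
      le_antisymm (hd2 ▸ hle) (psd_det_nonneg hH2W)
    rw [h0, hd2, zero_mul, mul_zero]
  · have hd2pos : 0 < H2.det := lt_of_le_of_ne (psd_det_nonneg hH2) (Ne.symm hd2)
    have hH2pd : H2.PosDef := psd_posDef hH2 hd2
    have hd1pos : 0 < H1.det := lt_of_lt_of_le hd2pos (det_mono hH2 hH12)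
    have hH1pd : H1.PosDef := psd_posDef hH1 hd1pos.ne'
    obtain ⟨hdet2, hpsd2⟩ := key_lemma hH2pd hW hH2W
    obtain ⟨hdet1, hpsd1⟩ := key_lemma hH1pd hW hH1W
    set R := hW.sqrt with hRdef
    have hRherm : Rᴴ = R := hW.posSemidef_sqrt.1
    have hdiff : ((1 - R * H1⁻¹ * R) - (1 - R * H2⁻¹ * R)).PosSemidef := by
      have hD : (H2⁻¹ - H1⁻¹).PosSemidef := inv_anti hH1pd hH2pd hH12
      have := hD.mul_mul_conjTranspose_same R
      rw [hRherm] at this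
      rwa [show R * (H2⁻¹ - H1⁻¹) * R = (1 - R * H1⁻¹ * R) - (1 - R * H2⁻¹ * R) by
        rw [mul_sub, sub_mul]; abel] at this
    have hBle : (1 - R * H2⁻¹ * R).det ≤ (1 - R * H1⁻¹ * R).det := det_mono hpsd2 hdiff
    rw [hdet1, hdet2]
    rw [show (1 - R * H2⁻¹ * R).det * H2.det * H1.det
        = (1 - R * H2⁻¹ * R).det * (H2.det * H1.det) by ring,
      show (1 - R * H1⁻¹ * R).det * H1.det * H2.det
        = (1 - R * H1⁻¹ * R).det * (H2.det * H1.det) by ring]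
    exact mul_le_mul_of_nonneg_right hBle (by positivity)
end

section
/- Let x1, …, x8 be real numbers with x1 + ⋯ + x8 = T and m ≤ x_i ≤ M for all i, where 0 < m ≤ M and T > 3m + 5M. Then x1 · x2 ⋯ x8 ≥ m² · (T − 2m − 5M) · M⁵. -/
lemma list_key (m M : ℝ) (hm : 0 < m) (hmM : m ≤ M) :
    ∀ (l : List ℝ) (a b : ℕ), a + b + 1 = l.length →
      (∀ y ∈ l, m ≤ y ∧ y ≤ M) →
      m ^ a * M ^ b * (l.sum - a * m - b * M) ≤ l.prod := by
  intro l
  induction l with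
  | nil => intro a b h _; simp at h
  | cons y l ih =>
    intro a b hlen hmem
    have hM : 0 < M := lt_of_lt_of_le hm hmM
    have hy := hmem y List.mem_cons_self
    have hmem' : ∀ z ∈ l, m ≤ z ∧ z ≤ M := fun z hz => hmem z (List.mem_cons_of_mem _ hz)
    simp only [List.length_cons] at hlen
    have hab : a + b = l.length := by omega
    rcases Nat.eq_zero_or_pos l.length with h0 | hpos
    · have ha : a = 0 := by omega
      have hb : b = 0 := by omega
      subst ha; subst hb
      have : l = [] := List.length_eq_zero_iff.mp h0
      subst this
      simp
    · have hsum_le : l.sum ≤ (l.length : ℝ) * M := by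
        have := List.sum_le_card_nsmul l M (fun z hz => (hmem' z hz).2)
        simpa [nsmul_eq_mul] using this
      have hsum_ge : (l.length : ℝ) * m ≤ l.sum := by
        have := List.card_nsmul_le_sum l m (fun z hz => (hmem' z hz).1)
        simpa [nsmul_eq_mul] using this
      have hy0 : 0 ≤ y := le_trans hm.le hy.1
      simp only [List.sum_cons, List.prod_cons]
      by_cases hmb : 1 ≤ a ∧ (b = 0 ∨ (a : ℝ) * m + (b : ℝ) * M ≤ l.sum)
      · -- m-merge
        obtain ⟨a', rfl⟩ : ∃ a', a = a' + 1 := ⟨a - 1, by omega⟩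
        have IH' := ih a' b (by omega) hmem'
        set u : ℝ := l.sum - a' * m - b * M with hu_def
        have hu : m ≤ u := by
          rcases hmb.2 with hb0 | hc
          · subst hb0
            have hlen' : (l.length : ℝ) = (a' : ℝ) + 1 := by
              push_cast [← hab]; ring
            simp only [hu_def, Nat.cast_zero]
            nlinarith [hsum_ge]
          · push_cast at hc ⊢
            simp only [hu_def]
            nlinarith [hc]
        have h2 : m * (y + u - m) ≤ y * u := by nlinarith [hy.1, hu]
        have hC : (0:ℝ) ≤ m ^ a' * M ^ b := by positivity
        have h1 : y * (m ^ a' * M ^ b * u) ≤ y * l.prod :=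
          mul_le_mul_of_nonneg_left IH' hy0
        calc m ^ (a' + 1) * M ^ b * (y + l.sum - (↑(a' + 1)) * m - (b : ℝ) * M)
            = m ^ a' * M ^ b * (m * (y + u - m)) := by
              simp only [hu_def]; push_cast; ring
          _ ≤ m ^ a' * M ^ b * (y * u) := mul_le_mul_of_nonneg_left h2 hC
          _ = y * (m ^ a' * M ^ b * u) := by ring
          _ ≤ y * l.prod := h1
      · -- M-merge
        have hb1 : 1 ≤ b := by
          rcases Nat.eq_zero_or_pos b with hb0 | h; swap; · exact h
          exfalso
          have ha1 : 1 ≤ a := by omega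
          exact hmb ⟨ha1, Or.inl hb0⟩
        obtain ⟨b', rfl⟩ : ∃ b', b = b' + 1 := ⟨b - 1, by omega⟩
        have IH' := ih a b' (by omega) hmem'
        set u : ℝ := l.sum - a * m - b' * M with hu_def
        have hu : u ≤ M := by
          rcases Nat.eq_zero_or_pos a with ha0 | ha1
          · subst ha0
            have hlen' : (l.length : ℝ) = (b' : ℝ) + 1 := by
              push_cast [← hab]; ring
            simp only [hu_def, Nat.cast_zero]
            nlinarith [hsum_le]
          · have hc : ¬ ((a : ℝ) * m + (↑(b' + 1) : ℝ) * M ≤ l.sum) := by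
              intro hc; exact hmb ⟨ha1, Or.inr hc⟩
            push_neg at hc
            push_cast at hc
            simp only [hu_def]
            nlinarith [hc]
        have h2 : M * (y + u - M) ≤ y * u := by nlinarith [hy.2, hu]
        have hC : (0:ℝ) ≤ m ^ a * M ^ b' := by positivity
        have h1 : y * (m ^ a * M ^ b' * u) ≤ y * l.prod :=
          mul_le_mul_of_nonneg_left IH' hy0
        calc m ^ a * M ^ (b' + 1) * (y + l.sum - (a : ℝ) * m - (↑(b' + 1)) * M)
            = m ^ a * M ^ b' * (M * (y + u - M)) := by
              simp only [hu_def]; push_cast; ring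
          _ ≤ m ^ a * M ^ b' * (y * u) := mul_le_mul_of_nonneg_left h2 hC
          _ = y * (m ^ a * M ^ b' * u) := by ring
          _ ≤ y * l.prod := h1

theorem prod_lower_bound (x : Fin 8 → ℝ) (m M T : ℝ) (hm : 0 < m) (hmM : m ≤ M)
    (hsum : ∑ i, x i = T) (hx : ∀ i, m ≤ x i ∧ x i ≤ M) (hT : 3 * m + 5 * M < T) :
    m ^ 2 * (T - 2 * m - 5 * M) * M ^ 5 ≤ ∏ i, x i := by
  have hmem : ∀ y ∈ List.ofFn x, m ≤ y ∧ y ≤ M := by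
    intro y hy
    rw [List.mem_ofFn] at hy
    obtain ⟨i, rfl⟩ := hy
    exact hx i
  have h := list_key m M hm hmM (List.ofFn x) 2 5 (by simp) hmem
  rw [List.sum_ofFn, List.prod_ofFn, hsum] at h
  push_cast at h
  nlinarith [h]
end

section
/- Let A and B be n×n real positive semidefinite matrices and let s, t ≥ 0 with s + t = 1. Then det(sA + tB) ≥ det(A)^s · det(B)^t (log-concavity of the determinant on positive semidefinite matrices). -/
open Matrix
open scoped MatrixOrder

lemma aux_psd_smul {n : ℕ} {A : Matrix (Fin n) (Fin n) ℝ} (hA : A.PosSemidef) {c : ℝ}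
    (hc : 0 ≤ c) : (c • A).PosSemidef := by
  refine posSemidef_iff_dotProduct_mulVec.mpr ⟨by simp [Matrix.IsHermitian, conjTranspose_smul, show Aᵀ = A from hA.1.eq],
    fun x => ?_⟩
  rw [smul_mulVec, dotProduct_smul]
  exact mul_nonneg hc (hA.dotProduct_mulVec_nonneg x)

lemma aux_psd_det_nonneg {n : ℕ} {A : Matrix (Fin n) (Fin n) ℝ} (hA : A.PosSemidef) :
    0 ≤ A.det := by
  rw [hA.1.det_eq_prod_eigenvalues]
  exact Finset.prod_nonneg fun i _ => by simpa using hA.eigenvalues_nonneg i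

lemma aux_posDef_of_det_ne_zero {n : ℕ} {A : Matrix (Fin n) (Fin n) ℝ} (hA : A.PosSemidef)
    (h : A.det ≠ 0) : A.PosDef := by
  refine posDef_iff_dotProduct_mulVec.mpr ⟨hA.1, fun x hx => ?_⟩
  rcases (hA.dotProduct_mulVec_nonneg x).lt_or_eq with hlt | heq
  · exact hlt
  · exfalso
    have h0 : A *ᵥ x = 0 := (hA.dotProduct_mulVec_zero_iff x).mp heq.symm
    have hinj := Matrix.mulVec_injective_iff_isUnit.mpr ((isUnit_iff_isUnit_det A).2 h.isUnit)
    exact hx (hinj (by simpa using h0))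

lemma aux_key {n : ℕ} {C : Matrix (Fin n) (Fin n) ℝ} (hC : C.PosDef)
    (s t : ℝ) (hs : 0 ≤ s) (ht : 0 ≤ t) (hst : s + t = 1) :
    C.det ^ t ≤ (s • (1 : Matrix (Fin n) (Fin n) ℝ) + t • C).det := by
  set U := (hC.1.eigenvectorUnitary : Matrix (Fin n) (Fin n) ℝ) with hUdef
  set lam := hC.1.eigenvalues with hlam
  have hUU : U * star U = 1 := (Matrix.mem_unitaryGroup_iff).mp hC.1.eigenvectorUnitary.2
  have hdecomp : s • (1 : Matrix (Fin n) (Fin n) ℝ) + t • C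
      = U * (diagonal (fun i => s + t * lam i)) * star U := by
    have hD : diagonal (fun i => s + t * lam i)
        = s • 1 + t • diagonal (RCLike.ofReal ∘ lam) := by
      ext i j
      by_cases h : i = j <;> simp [h, Matrix.one_apply, diagonal_apply]
    rw [hD, mul_add, add_mul, Matrix.mul_smul, Matrix.smul_mul, Matrix.mul_smul,
      Matrix.smul_mul, mul_one, hUU]
    conv_lhs => rw [hC.1.spectral_theorem]
    rfl
  have hdet : (s • (1 : Matrix (Fin n) (Fin n) ℝ) + t • C).det
      = ∏ i, (s + t * lam i) := by
    rw [hdecomp, det_mul, det_mul, mul_right_comm, ← det_mul, hUU, det_one, one_mul,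
      det_diagonal]
  have hCdet : C.det = ∏ i, lam i := by
    simpa using hC.1.det_eq_prod_eigenvalues
  have hlam_pos : ∀ i, 0 < lam i := fun i => hC.eigenvalues_pos i
  rw [hdet, hCdet, ← Real.finset_prod_rpow _ _ (fun i _ => (hlam_pos i).le)]
  refine Finset.prod_le_prod (fun i _ => Real.rpow_nonneg (hlam_pos i).le t) (fun i _ => ?_)
  calc lam i ^ t = 1 ^ s * lam i ^ t := by rw [Real.one_rpow, one_mul]
    _ ≤ s * 1 + t * lam i := Real.geom_mean_le_arith_mean2_weighted hs ht zero_le_one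
        (hlam_pos i).le hst
    _ = s + t * lam i := by ring

theorem det_log_concave (n : ℕ) (A B : Matrix (Fin n) (Fin n) ℝ)
    (hA : A.PosSemidef) (hB : B.PosSemidef) (s t : ℝ) (hs : 0 ≤ s) (ht : 0 ≤ t)
    (hst : s + t = 1) :
    A.det ^ s * B.det ^ t ≤ (s • A + t • B).det := by
  have hPSD : (s • A + t • B).PosSemidef := (aux_psd_smul hA hs).add (aux_psd_smul hB ht)
  rcases hs.eq_or_lt with hs0 | hs'
  · have ht1 : t = 1 := by linarith
    subst ht1
    rw [← hs0, Real.rpow_zero, one_mul, Real.rpow_one, zero_smul, one_smul, zero_add]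
  rcases ht.eq_or_lt with ht0 | ht'
  · have hs1 : s = 1 := by linarith
    subst hs1
    rw [← ht0, Real.rpow_zero, mul_one, Real.rpow_one, one_smul, zero_smul, add_zero]
  by_cases hdA : A.det = 0
  · rw [hdA, Real.zero_rpow hs'.ne', zero_mul]
    exact aux_psd_det_nonneg hPSD
  by_cases hdB : B.det = 0
  · rw [hdB, Real.zero_rpow ht'.ne', mul_zero]
    exact aux_psd_det_nonneg hPSD
  -- both positive definite
  have hA' : A.PosDef := aux_posDef_of_det_ne_zero hA hdA
  have hB' : B.PosDef := aux_posDef_of_det_ne_zero hB hdB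
  set S := CFC.sqrt A with hSdef
  have hS : S.PosSemidef := (CFC.sqrt_nonneg A).posSemidef
  have hSS : S * S = A := CFC.sqrt_mul_sqrt_self A hA.nonneg
  have hdetS : S.det * S.det = A.det := by rw [← det_mul, hSS]
  have hdS : S.det ≠ 0 := fun h => hdA (by rw [← hdetS, h, mul_zero])
  have hu : IsUnit S.det := hdS.isUnit
  set C := S⁻¹ * B * S⁻¹ with hCdef
  have hSinvH : S⁻¹ᴴ = S⁻¹ := hS.1.inv
  have hCpsd : C.PosSemidef := by
    have := hB.conjTranspose_mul_mul_same S⁻¹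
    rwa [hSinvH] at this
  have hdetC : C.det = S.det⁻¹ * B.det * S.det⁻¹ := by
    rw [hCdef, det_mul, det_mul, det_nonsing_inv, Ring.inverse_eq_inv']
  have hdetCne : C.det ≠ 0 := by
    rw [hdetC]
    exact mul_ne_zero (mul_ne_zero (inv_ne_zero hdS) hdB) (inv_ne_zero hdS)
  have hC : C.PosDef := aux_posDef_of_det_ne_zero hCpsd hdetCne
  have hSB : S * C * S = B := by
    rw [hCdef]
    calc S * (S⁻¹ * B * S⁻¹) * S = (S * S⁻¹) * B * (S⁻¹ * S) := by
          simp only [Matrix.mul_assoc]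
      _ = B := by rw [mul_nonsing_inv _ hu, nonsing_inv_mul _ hu, one_mul, mul_one]
  have hdecomp : s • A + t • B = S * (s • (1 : Matrix (Fin n) (Fin n) ℝ) + t • C) * S := by
    rw [mul_add, add_mul, Matrix.mul_smul, Matrix.smul_mul, Matrix.mul_smul, Matrix.smul_mul,
      mul_one, hSS, hSB]
  have hdet : (s • A + t • B).det
      = A.det * (s • (1 : Matrix (Fin n) (Fin n) ℝ) + t • C).det := by
    rw [hdecomp, det_mul, det_mul, mul_right_comm, hdetS]
  have hApos : 0 < A.det := hA'.det_pos
  have hBpos : 0 < B.det := hB'.det_pos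
  have hCdetval : C.det = B.det / A.det := by
    rw [hdetC, ← hdetS]
    field_simp
  have hLHS : A.det ^ s * B.det ^ t = A.det * C.det ^ t := by
    rw [hCdetval, Real.div_rpow hBpos.le hApos.le]
    rw [show s = 1 - t by linarith, Real.rpow_sub hApos, Real.rpow_one]
    field_simp
  rw [hLHS, hdet]
  exact mul_le_mul_of_nonneg_left (aux_key hC s t hs ht hst) hApos.le
end

section
/- Let A be an n×n real positive semidefinite matrix with tr(A) = λ and n ≥ 2. Then det(λ·Id − A) ≥ (n − 1)ⁿ · det(A). -/
open Finset

/-- Unweighted AM–GM in power form. -/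
lemma amgm_pow {ι : Type*} (s : Finset ι) (f : ι → ℝ) (hf : ∀ i ∈ s, 0 ≤ f i)
    (hs : s.Nonempty) :
    ∏ i ∈ s, f i ≤ ((∑ i ∈ s, f i) / s.card) ^ s.card := by
  have hm : (0:ℝ) < s.card := by exact_mod_cast hs.card_pos
  have h := Real.geom_mean_le_arith_mean_weighted s (fun _ => (s.card:ℝ)⁻¹) f
    (fun i _ => by positivity) (by rw [Finset.sum_const, nsmul_eq_mul]; exact mul_inv_cancel₀ (ne_of_gt hm)) hf
  have h1 : ∏ i ∈ s, f i ^ ((s.card:ℝ)⁻¹) = (∏ i ∈ s, f i) ^ ((s.card:ℝ)⁻¹) :=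
    Real.finset_prod_rpow s f hf _
  have h2 : ∑ i ∈ s, (s.card:ℝ)⁻¹ * f i = (∑ i ∈ s, f i) / s.card := by
    rw [← Finset.mul_sum]; ring
  rw [h1, h2] at h
  have hprod : 0 ≤ ∏ i ∈ s, f i := Finset.prod_nonneg hf
  have := Real.rpow_le_rpow (Real.rpow_nonneg hprod _) h (le_of_lt hm)
  rwa [← Real.rpow_mul hprod, inv_mul_cancel₀ (ne_of_gt hm), Real.rpow_one,
    Real.rpow_natCast] at this

lemma key_ineq (n : ℕ) (hn : 2 ≤ n) (μ : Fin n → ℝ) (hμ : ∀ i, 0 ≤ μ i) :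
    ((n : ℝ) - 1) ^ n * ∏ i, μ i ≤ ∏ i, ((∑ j, μ j) - μ i) := by
  obtain ⟨m, rfl⟩ : ∃ m, n = m + 1 := ⟨n - 1, by omega⟩
  have hm1 : 1 ≤ m := by omega
  have hmR : ((m + 1 : ℕ) : ℝ) - 1 = (m : ℝ) := by push_cast; ring
  rw [hmR]
  have hmpos : (0:ℝ) < m := by exact_mod_cast hm1
  set S : ℝ := ∑ j, μ j with hS
  have hsub : ∀ i : Fin (m+1), (∑ j ∈ univ.erase i, μ j) = S - μ i := by
    intro i
    have := Finset.add_sum_erase univ μ (mem_univ i)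
    linarith
  have hSnn : ∀ i : Fin (m+1), 0 ≤ S - μ i := by
    intro i
    rw [← hsub i]
    exact Finset.sum_nonneg fun j _ => hμ j
  by_cases h0 : ∃ i, μ i = 0
  · obtain ⟨i, hi⟩ := h0
    have : ∏ i, μ i = 0 := Finset.prod_eq_zero (mem_univ i) hi
    rw [this, mul_zero]
    exact Finset.prod_nonneg fun i _ => hSnn i
  · push_neg at h0
    have hpos : ∀ i, 0 < μ i := fun i => lt_of_le_of_ne (hμ i) (Ne.symm (h0 i))
    have hPpos : 0 < ∏ i, μ i := Finset.prod_pos fun i _ => hpos i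
    have hcard : ∀ i : Fin (m+1), (univ.erase i).card = m := by
      intro i
      rw [Finset.card_erase_of_mem (mem_univ i), Finset.card_univ, Fintype.card_fin]
      omega
    have hi : ∀ i : Fin (m+1), ∏ j ∈ univ.erase i, μ j ≤ ((S - μ i) / m) ^ m := by
      intro i
      have hne : (univ.erase i).Nonempty := by
        rw [← Finset.card_pos, hcard]; omega
      have := amgm_pow (univ.erase i) μ (fun j _ => hμ j) hne
      rwa [hsub, hcard] at this
    have hprodprod : ∏ i : Fin (m+1), ∏ j ∈ univ.erase i, μ j = (∏ i, μ i) ^ m := by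
      have h1 : (∏ i : Fin (m+1), ∏ j ∈ univ.erase i, μ j) * ∏ i, μ i
          = (∏ i, μ i) ^ (m+1) := by
        rw [← Finset.prod_mul_distrib]
        rw [Finset.prod_congr rfl fun i _ => Finset.prod_erase_mul univ μ (mem_univ i)]
        rw [Finset.prod_const, Finset.card_univ, Fintype.card_fin]
      exact mul_right_cancel₀ (ne_of_gt hPpos) (by rw [h1, pow_succ])
    have hchain : (∏ i, μ i) ^ m ≤ (∏ i, ((S - μ i) / m)) ^ m := by
      rw [← hprodprod, ← Finset.prod_pow]
      exact Finset.prod_le_prod (fun i _ => Finset.prod_nonneg fun j _ => hμ j)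
        (fun i _ => hi i)
    have hbase : ∏ i, μ i ≤ ∏ i, ((S - μ i) / m) := by
      have h1 : (0:ℝ) ≤ ∏ i, μ i := le_of_lt hPpos
      have h2 : (0:ℝ) ≤ ∏ i, ((S - μ i) / m) :=
        Finset.prod_nonneg fun i _ => div_nonneg (hSnn i) (le_of_lt hmpos)
      exact (pow_le_pow_iff_left₀ h1 h2 (by omega)).mp hchain
    have hfin : ∏ i, ((S - μ i) / m) = (∏ i, (S - μ i)) / (m:ℝ) ^ (m+1) := by
      rw [Finset.prod_div_distrib, Finset.prod_const, Finset.card_univ, Fintype.card_fin]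
    calc (m : ℝ) ^ (m+1) * ∏ i, μ i ≤ (m : ℝ) ^ (m+1) * ∏ i, ((S - μ i) / m) := by
          apply mul_le_mul_of_nonneg_left hbase
          positivity
      _ = ∏ i, (S - μ i) := by
          rw [hfin]
          field_simp

theorem det_trace_sub_bound (n : ℕ) (hn : 2 ≤ n) (A : Matrix (Fin n) (Fin n) ℝ)
    (hA : A.PosSemidef) (l : ℝ) (htr : A.trace = l) :
    ((n : ℝ) - 1) ^ n * A.det ≤ (l • (1 : Matrix (Fin n) (Fin n) ℝ) - A).det := by
  have hH : A.IsHermitian := hA.1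
  set μ := hH.eigenvalues with hμdef
  have hμ : ∀ i, 0 ≤ μ i := hA.eigenvalues_nonneg
  set U : Matrix (Fin n) (Fin n) ℝ := (hH.eigenvectorUnitary : Matrix (Fin n) (Fin n) ℝ)
  have hUU : star U * U = 1 := Unitary.coe_star_mul_self hH.eigenvectorUnitary
  have hUU' : U * star U = 1 := Unitary.coe_mul_star_self hH.eigenvectorUnitary
  have hspec : A = U * Matrix.diagonal (RCLike.ofReal ∘ μ) * star U := hH.spectral_theorem
  have hdiag : Matrix.diagonal (RCLike.ofReal ∘ μ) = Matrix.diagonal μ := by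
    congr 1
  -- determinant of A
  have hdetA : A.det = ∏ i, μ i := by
    rw [hspec, hdiag, Matrix.det_mul, Matrix.det_mul, mul_comm, ← mul_assoc,
      ← Matrix.det_mul, hUU, Matrix.det_one, one_mul, Matrix.det_diagonal]
  -- trace of A
  have htrace : A.trace = ∑ i, μ i := by
    conv_lhs => rw [hspec]
    rw [Matrix.trace_mul_cycle, hUU, one_mul, hdiag, Matrix.trace_diagonal]
  -- det of l•1 - A
  have hsub : l • (1 : Matrix (Fin n) (Fin n) ℝ) - A
      = U * Matrix.diagonal (fun i => l - μ i) * star U := by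
    have h1 : Matrix.diagonal (fun i => l - μ i)
        = l • (1 : Matrix (Fin n) (Fin n) ℝ) - Matrix.diagonal μ := by
      rw [Matrix.smul_one_eq_diagonal, ← Matrix.diagonal_sub]
    rw [h1, Matrix.mul_sub, Matrix.sub_mul, ← hdiag, ← hspec]
    congr 1
    rw [Matrix.mul_smul, Matrix.smul_mul, mul_one, hUU']
  have hdetSub : (l • (1 : Matrix (Fin n) (Fin n) ℝ) - A).det = ∏ i, (l - μ i) := by
    rw [hsub, Matrix.det_mul, Matrix.det_mul, mul_comm, ← mul_assoc,
      ← Matrix.det_mul, hUU, Matrix.det_one, one_mul, Matrix.det_diagonal]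
  rw [hdetA, hdetSub]
  have hl : l = ∑ i, μ i := by rw [← htr, htrace]
  subst hl
  exact key_ineq n hn μ hμ
end

section
/- Let μ1 ≥ μ2 ≥ ⋯ ≥ μ8 > 0 with μ1 ≥ μ2 + ⋯ + μ8, set μ = μ1 + ⋯ + μ8, and fix β ∈ [0,1]. Consider E_β(z1,…,z8) = ∏_{j=1}^{8} (1 − z_j/μ_j) on the domain {0 ≤ z_j ≤ μ_j, Σ z_j ≥ βμ}. Then sup E_β ≤ (μ1 − βμ/2)/μ1. -/
lemma prod_one_sub_mul_one_add_sum_le {ι : Type*} (s : Finset ι) (a : ι → ℝ)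
    (h0 : ∀ i ∈ s, 0 ≤ a i) (h1 : ∀ i ∈ s, a i ≤ 1) :
    (∏ i ∈ s, (1 - a i)) * (1 + ∑ i ∈ s, a i) ≤ 1 := by
  induction s using Finset.cons_induction with
  | empty => simp
  | cons i s his ih =>
    simp only [Finset.prod_cons, Finset.sum_cons]
    have hP : (∏ j ∈ s, (1 - a j)) * (1 + ∑ j ∈ s, a j) ≤ 1 :=
      ih (fun j hj => h0 j (Finset.mem_cons_of_mem hj))
        (fun j hj => h1 j (Finset.mem_cons_of_mem hj))
    have hP0 : 0 ≤ ∏ j ∈ s, (1 - a j) :=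
      Finset.prod_nonneg fun j hj => by
        have := h1 j (Finset.mem_cons_of_mem hj); linarith
    have hS0 : 0 ≤ ∑ j ∈ s, a j :=
      Finset.sum_nonneg fun j hj => h0 j (Finset.mem_cons_of_mem hj)
    have hai0 : 0 ≤ a i := h0 i (Finset.mem_cons_self i s)
    have hai1 : a i ≤ 1 := h1 i (Finset.mem_cons_self i s)
    nlinarith [mul_nonneg hP0 (mul_nonneg hai0 (by linarith : (0:ℝ) ≤ a i + ∑ j ∈ s, a j))]

theorem E_beta_sup_bound (μ : Fin 8 → ℝ) (hpos : ∀ j, 0 < μ j)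
    (hmono : ∀ i j : Fin 8, i ≤ j → μ j ≤ μ i)
    (hdom : (∑ j, μ j) - μ 0 ≤ μ 0)
    (β : ℝ) (hβ0 : 0 ≤ β) (hβ1 : β ≤ 1)
    (z : Fin 8 → ℝ) (hz : ∀ j, 0 ≤ z j ∧ z j ≤ μ j)
    (hzsum : β * (∑ j, μ j) ≤ ∑ j, z j) :
    ∏ j, (1 - z j / μ j) ≤ (μ 0 - β * (∑ j, μ j) / 2) / μ 0 := by
  have hμ0 : 0 < μ 0 := hpos 0
  set a : Fin 8 → ℝ := fun j => z j / μ j with ha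
  have ha0 : ∀ j, 0 ≤ a j := fun j => div_nonneg (hz j).1 (hpos j).le
  have ha1 : ∀ j, a j ≤ 1 := fun j => by
    rw [div_le_one (hpos j)]; exact (hz j).2
  -- split off index 0
  rw [Fin.prod_univ_succ]
  set P : ℝ := ∏ i : Fin 7, (1 - a i.succ) with hPdef
  set t : ℝ := ∑ i : Fin 7, a i.succ with htdef
  have hP0 : 0 ≤ P := Finset.prod_nonneg fun i _ => by have := ha1 i.succ; linarith
  have ht0 : 0 ≤ t := Finset.sum_nonneg fun i _ => ha0 i.succ
  have hPt : P * (1 + t) ≤ 1 :=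
    prod_one_sub_mul_one_add_sum_le Finset.univ (fun i : Fin 7 => a i.succ)
      (fun i _ => ha0 i.succ) (fun i _ => ha1 i.succ)
  set s : ℝ := β * (∑ j, μ j) / μ 0 with hsdef
  have hμsum : (0:ℝ) ≤ ∑ j, μ j := Finset.sum_nonneg fun j _ => (hpos j).le
  have hs0 : 0 ≤ s := div_nonneg (mul_nonneg hβ0 hμsum) hμ0.le
  have hs2 : s ≤ 2 := by
    rw [div_le_iff₀ hμ0]
    nlinarith [mul_le_of_le_one_left hμsum hβ1]
  -- tail sums
  have hzsplit : (∑ j, z j) = z 0 + ∑ i : Fin 7, z i.succ := Fin.sum_univ_succ z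
  have hμsplit : (∑ j, μ j) = μ 0 + ∑ i : Fin 7, μ i.succ := Fin.sum_univ_succ μ
  have htailμ : (∑ i : Fin 7, μ i.succ) ≤ μ 0 := by linarith
  have htailz : (∑ i : Fin 7, z i.succ) ≤ μ 0 := by
    calc (∑ i : Fin 7, z i.succ) ≤ ∑ i : Fin 7, μ i.succ :=
          Finset.sum_le_sum fun i _ => (hz i.succ).2
      _ ≤ μ 0 := htailμ
  -- t ≥ (tail sum of z) / μ 0
  have htlb : (∑ i : Fin 7, z i.succ) / μ 0 ≤ t := by
    rw [Finset.sum_div]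
    refine Finset.sum_le_sum fun i _ => ?_
    have hij : μ i.succ ≤ μ 0 := hmono 0 i.succ (Fin.zero_le _)
    rw [div_le_div_iff₀ hμ0 (hpos i.succ)]
    nlinarith [(hz i.succ).1]
  have hst : s ≤ a 0 + t := by
    have h1 : β * (∑ j, μ j) / μ 0 ≤ (∑ j, z j) / μ 0 :=
      (div_le_div_iff_of_pos_right hμ0).mpr hzsum
    have h2 : (∑ j, z j) / μ 0 = z 0 / μ 0 + (∑ i : Fin 7, z i.succ) / μ 0 := by
      rw [hzsplit, add_div]
    have h3 : z 0 / μ 0 ≤ a 0 := le_rfl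
    calc s ≤ (∑ j, z j) / μ 0 := h1
      _ = z 0 / μ 0 + (∑ i : Fin 7, z i.succ) / μ 0 := h2
      _ ≤ a 0 + t := by exact add_le_add h3 htlb
  have ha0lb : s - 1 ≤ a 0 := by
    have h1 : β * (∑ j, μ j) - μ 0 ≤ z 0 := by linarith
    have : (β * (∑ j, μ j) - μ 0) / μ 0 ≤ z 0 / μ 0 :=
      (div_le_div_iff_of_pos_right hμ0).mpr h1
    calc s - 1 = (β * (∑ j, μ j) - μ 0) / μ 0 := by
          rw [hsdef, sub_div, div_self hμ0.ne']
      _ ≤ z 0 / μ 0 := this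
      _ = a 0 := rfl
  have hRHS : (μ 0 - β * (∑ j, μ j) / 2) / μ 0 = 1 - s / 2 := by
    rw [hsdef, sub_div, div_self hμ0.ne', mul_div_assoc, div_div]
    ring_nf
  rw [hRHS]
  have h1t : (0:ℝ) < 1 + t := by linarith
  have key : (1 - a 0) * P * (1 + t) ≤ (1 - s / 2) * (1 + t) := by
    have hA : (1 - a 0) * P * (1 + t) ≤ 1 - a 0 := by
      have := mul_nonneg (by have := ha1 0; linarith : (0:ℝ) ≤ 1 - a 0)
        (by linarith : (0:ℝ) ≤ 1 - P * (1 + t))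
      nlinarith
    have hB : 1 - a 0 ≤ (1 - s / 2) * (1 + t) := by
      nlinarith [mul_nonneg (by linarith : (0:ℝ) ≤ 1 - s/2) (by linarith : (0:ℝ) ≤ a 0 + t - s),
        mul_nonneg hs0 (by linarith : (0:ℝ) ≤ a 0 - s + 1)]
    linarith
  exact (mul_le_mul_iff_of_pos_right h1t).mp key
end
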